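/- Let n ≥ 1 and let x₁, …, xₙ ∈ [0, 1) with Σᵢ xᵢ ≤ 1. Then ∏_{i=1}^{n} (1 − xᵢ) · e^{Σ_{i=1}^{n} xᵢ} ≤ 1 − (1/2)·Σ_{i=1}^{n} xᵢ². -/

import Mathlib

/-- Pointwise bound: for `x ∈ [0,1)`, `log(1-x) + x ≤ -(x²/2 + x³/3)`. -/
lemma aux_log_upper (x : ℝ) (h0 : 0 ≤ x) (h1 : x < 1) :
    Real.log (1 - x) + x ≤ -(x ^ 2 / 2 + x ^ 3 / 3) := by
  set F : ℝ → ℝ := fun t => -t - t ^ 2 / 2 - t ^ 3 / 3 - Real.log (1 - t) with hF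
  have hd : ∀ t ∈ Set.Ioo (0 : ℝ) x, HasDerivAt F (-1 - t - t ^ 2 + 1 / (1 - t)) t := by
    intro t ht
    have htx : t < 1 := lt_trans ht.2 h1
    have hne : (1 : ℝ) - t ≠ 0 := by linarith [ht.1]
    have hlog : HasDerivAt (fun t : ℝ => Real.log (1 - t)) ((1 - t)⁻¹ * (-1)) t :=
      (Real.hasDerivAt_log hne).comp t (((hasDerivAt_id t).const_sub 1))
    have hpoly : HasDerivAt (fun t : ℝ => -t - t ^ 2 / 2 - t ^ 3 / 3)
        (-1 - t - t ^ 2) t := by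
      have := (((hasDerivAt_id t).neg.sub
        (((hasDerivAt_pow 2 t)).div_const 2)).sub
        (((hasDerivAt_pow 3 t)).div_const 3))
      refine this.congr_deriv ?_
      ring
    have := hpoly.sub hlog
    refine this.congr_deriv ?_
    ring
  have hmono : MonotoneOn F (Set.Icc 0 x) := by
    apply monotoneOn_of_deriv_nonneg (convex_Icc 0 x)
    · apply ContinuousOn.sub
      · fun_prop
      · apply ContinuousOn.log
        · fun_prop
        · intro t ht
          have : t ≤ x := ht.2
          intro h
          have : t = 1 := by linarith
          linarith [ht.2, h1, this ▸ ht.2]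
    · intro t ht
      rw [interior_Icc] at ht
      exact (hd t ht).differentiableAt.differentiableWithinAt
    · intro t ht
      rw [interior_Icc] at ht
      rw [(hd t ht).deriv]
      have h1t : 0 < 1 - t := by linarith [ht.2, h1]
      have : -1 - t - t ^ 2 + 1 / (1 - t) = t ^ 3 / (1 - t) := by
        field_simp
        ring
      rw [this]
      exact div_nonneg (pow_nonneg ht.1.le 3) h1t.le
  have h0x : (0 : ℝ) ∈ Set.Icc 0 x := ⟨le_refl 0, h0⟩
  have hxx : x ∈ Set.Icc (0 : ℝ) x := ⟨h0, le_refl x⟩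
  have := hmono h0x hxx h0
  simp only [hF, Real.log_one] at this
  norm_num at this
  linarith

/-- For `y ∈ [0,1/2]`, `-(y + (4/3)y²) ≤ log(1-y)`. -/
lemma aux_log_lower (y : ℝ) (h0 : 0 ≤ y) (h1 : y ≤ 1 / 2) :
    -(y + (4 / 3) * y ^ 2) ≤ Real.log (1 - y) := by
  set G : ℝ → ℝ := fun t => Real.log (1 - t) + t + (4 / 3) * t ^ 2 with hG
  have hd : ∀ t ∈ Set.Ioo (0 : ℝ) y, HasDerivAt G (-(1 / (1 - t)) + 1 + (8 / 3) * t) t := by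
    intro t ht
    have htx : t < 1 := lt_of_lt_of_le ht.2 (by linarith)
    have hne : (1 : ℝ) - t ≠ 0 := by linarith [ht.1]
    have hlog : HasDerivAt (fun t : ℝ => Real.log (1 - t)) ((1 - t)⁻¹ * (-1)) t :=
      (Real.hasDerivAt_log hne).comp t (((hasDerivAt_id t).const_sub 1))
    have hpoly : HasDerivAt (fun t : ℝ => t + (4 / 3) * t ^ 2) (1 + (8 / 3) * t) t := by
      have := (hasDerivAt_id t).add ((hasDerivAt_pow 2 t).const_mul (4 / 3 : ℝ))
      refine this.congr_deriv ?_
      ring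
    have := (hlog.add hpoly)
    refine (this.congr_deriv ?_).congr_of_eventuallyEq (Filter.Eventually.of_forall (fun s => ?_))
    · ring
    · simp only [hG, Pi.add_apply]
      ring
  have hmono : MonotoneOn G (Set.Icc 0 y) := by
    apply monotoneOn_of_deriv_nonneg (convex_Icc 0 y)
    · apply ContinuousOn.add
      apply ContinuousOn.add
      · apply ContinuousOn.log
        · fun_prop
        · intro t ht
          intro h
          have : t = 1 := by linarith
          have := ht.2
          linarith
      · fun_prop
      · fun_prop
    · intro t ht
      rw [interior_Icc] at ht
      exact (hd t ht).differentiableAt.differentiableWithinAt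
    · intro t ht
      rw [interior_Icc] at ht
      rw [(hd t ht).deriv]
      have h1t : 0 < 1 - t := by nlinarith [ht.2]
      have : -(1 / (1 - t)) + 1 + (8 / 3) * t = t * (5 / 3 - (8 / 3) * t) / (1 - t) := by
        field_simp
        ring
      rw [this]
      have : t ≤ 1 / 2 := le_trans ht.2.le h1
      have h5 : 0 ≤ 5 / 3 - (8 / 3) * t := by linarith
      exact div_nonneg (mul_nonneg ht.1.le h5) h1t.le
  have h0x : (0 : ℝ) ∈ Set.Icc 0 y := ⟨le_refl 0, h0⟩
  have hxx : y ∈ Set.Icc (0 : ℝ) y := ⟨h0, le_refl y⟩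
  have := hmono h0x hxx h0
  simp only [hG, Real.log_one] at this
  norm_num at this
  linarith

/-- For `n ≥ 1` and `x₁, …, xₙ ∈ [0, 1)` with `Σ xᵢ ≤ 1`,
`∏ (1 − xᵢ) · e^{Σ xᵢ} ≤ 1 − (1/2) Σ xᵢ²`. -/
theorem stmt_13 (n : ℕ) (hn : 1 ≤ n) (x : Fin n → ℝ)
    (hx0 : ∀ i, 0 ≤ x i) (hx1 : ∀ i, x i < 1) (hsum : ∑ i, x i ≤ 1) :
    (∏ i, (1 - x i)) * Real.exp (∑ i, x i) ≤ 1 - (1 / 2) * ∑ i, (x i) ^ 2 := by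
  set Q : ℝ := ∑ i, (x i) ^ 2 with hQ
  set C : ℝ := ∑ i, (x i) ^ 3 with hC
  have hpos : ∀ i, 0 < 1 - x i := fun i => by linarith [hx1 i]
  -- LHS as a single exponential
  have hlhs : (∏ i, (1 - x i)) * Real.exp (∑ i, x i)
      = Real.exp (∑ i, (Real.log (1 - x i) + x i)) := by
    rw [Finset.sum_add_distrib, Real.exp_add]
    congr 1
    rw [Real.exp_sum]
    exact Finset.prod_congr rfl (fun i _ => (Real.exp_log (hpos i)).symm)
  rw [hlhs]
  -- bound the exponent pointwise
  have hQ0 : 0 ≤ Q := Finset.sum_nonneg (fun i _ => sq_nonneg _)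
  have hQ1 : Q ≤ 1 := by
    refine le_trans ?_ hsum
    apply Finset.sum_le_sum
    intro i _
    nlinarith [hx0 i, hx1 i]
  have hC0 : 0 ≤ C := Finset.sum_nonneg (fun i _ => pow_nonneg (hx0 i) 3)
  -- Cauchy-Schwarz : Q^2 ≤ S * C ≤ C
  have hQC : Q ^ 2 ≤ C := by
    have hcs := Finset.sum_mul_sq_le_sq_mul_sq Finset.univ
      (fun i => Real.sqrt (x i)) (fun i => x i * Real.sqrt (x i))
    have e1 : ∀ i : Fin n, Real.sqrt (x i) * (x i * Real.sqrt (x i)) = (x i) ^ 2 := by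
      intro i
      rw [show Real.sqrt (x i) * (x i * Real.sqrt (x i))
        = (Real.sqrt (x i) * Real.sqrt (x i)) * x i by ring,
        Real.mul_self_sqrt (hx0 i)]
      ring
    have e2 : ∀ i : Fin n, Real.sqrt (x i) ^ 2 = x i := fun i => Real.sq_sqrt (hx0 i)
    have e3 : ∀ i : Fin n, (x i * Real.sqrt (x i)) ^ 2 = (x i) ^ 3 := by
      intro i
      rw [mul_pow, Real.sq_sqrt (hx0 i)]
      ring
    simp only [e1, e2, e3] at hcs
    calc Q ^ 2 ≤ (∑ i, x i) * C := hcs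
      _ ≤ 1 * C := by apply mul_le_mul_of_nonneg_right hsum hC0
      _ = C := one_mul C
  have hexp : ∑ i, (Real.log (1 - x i) + x i) ≤ -(Q / 2 + C / 3) := by
    have : ∑ i, (Real.log (1 - x i) + x i) ≤ ∑ i, (-((x i) ^ 2 / 2 + (x i) ^ 3 / 3)) :=
      Finset.sum_le_sum (fun i _ => aux_log_upper (x i) (hx0 i) (hx1 i))
    refine le_trans this (le_of_eq ?_)
    rw [hQ, hC, Finset.sum_div, Finset.sum_div, ← Finset.sum_add_distrib]
    rw [← Finset.sum_neg_distrib]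
  have hQhalf : -(Q / 2 + C / 3) ≤ Real.log (1 - Q / 2) := by
    have h2 := aux_log_lower (Q / 2) (by linarith) (by linarith)
    have h3 : Q / 2 + (4 / 3) * (Q / 2) ^ 2 ≤ Q / 2 + C / 3 := by nlinarith [hQC]
    linarith
  calc Real.exp (∑ i, (Real.log (1 - x i) + x i))
      ≤ Real.exp (Real.log (1 - Q / 2)) := Real.exp_le_exp.mpr (le_trans hexp hQhalf)
    _ = 1 - Q / 2 := Real.exp_log (by linarith)
    _ = 1 - (1 / 2) * Q := by ring
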